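/- For every h ∈ {1,…,n} and every a ∈ ℤ ∪ {∞}, the set T(h,a) is a triangulation of the punctured completed (n,∞)-gon P_{\overline{n,∞}}: its elements are pairwise non-crossing, and every tagged edge not belonging to T(h,a) crosses some element of T(h,a). -/

import Mathlib

/-!
STATEMENT 4: For every line `h` and every `a ∈ ℤ ∪ {∞}`, the set `T(h,a)` of all tagged
edges of the punctured completed `(n,∞)`-gon with first endpoint `(h,a)` is a
triangulation: its elements are pairwise non-crossing, and every tagged edge not
belonging to `T(h,a)` crosses some element of `T(h,a)`.

Second coordinates live in `WithTop ℤ` (with `∞ + 1 = ∞`); lines are indexed by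
`Fin (n+1)`, covering all `n ≥ 1`.
-/

namespace CompletedPuncturedGon

/-- An (unconstrained) edge datum of the punctured completed `(n+1,∞)`-gon. -/
structure EdgeC (n : ℕ) where
  p : Fin (n + 1) × WithTop ℤ
  q : Fin (n + 1) × WithTop ℤ
  sgn : ℤ

/-- `E` is a tagged edge: `q ≠ (p₁, p₂ + 1)`, the sign is `±1`, and the sign is `+1`
whenever the two endpoints are distinct. -/
def IsTaggedC {n : ℕ} (E : EdgeC n) : Prop :=
  E.q ≠ (E.p.1, E.p.2 + 1) ∧ (E.sgn = 1 ∨ E.sgn = -1) ∧ (E.p ≠ E.q → E.sgn = 1)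

/-- `σ(a) = 1/2 + a/(2(1+|a|)) ∈ (0,1)`. -/
noncomputable def sig (a : ℤ) : ℝ := 1 / 2 + (a : ℝ) / (2 * (1 + |(a : ℝ)|))

/-- The embedding of the marked points into the circle `ℝ/ℤ`; the accumulation point of
the `h`-th line (`a = ∞`) goes to `(h+1)/(n+1)`. -/
noncomputable def thetaC (n : ℕ) (p : Fin (n + 1) × WithTop ℤ) : ℝ :=
  WithTop.recTopCoe (((p.1.val : ℝ) + 1) / (n + 1))
    (fun a : ℤ => ((p.1.val : ℝ) + sig a) / (n + 1)) p.2

/-- `(x, y)` is a lift of the edge `E` (with distinct endpoints). -/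
def IsLiftC {n : ℕ} (E : EdgeC n) (x y : ℝ) : Prop :=
  (∃ k : ℤ, x = thetaC n E.p + k) ∧ (∃ k : ℤ, y = thetaC n E.q + k) ∧ x < y ∧ y < x + 1

/-- `E` crosses `F`. -/
def CrossesC {n : ℕ} (E F : EdgeC n) : Prop :=
  (E.p ≠ E.q ∧ F.p ≠ F.q ∧ ∃ x₁ y₁ x₂ y₂ : ℝ,
    IsLiftC E x₁ y₁ ∧ IsLiftC F x₂ y₂ ∧
    ((x₁ < x₂ ∧ x₂ < y₁ ∧ y₁ < y₂) ∨ (x₂ < x₁ ∧ x₁ < y₂ ∧ y₂ < y₁))) ∨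
  (E.p ≠ E.q ∧ F.p = F.q ∧ ∃ x y t : ℝ,
    IsLiftC E x y ∧ (∃ k : ℤ, t = thetaC n F.p + k) ∧ x < t ∧ t < y) ∨
  (E.p = E.q ∧ F.p ≠ F.q ∧ ∃ x y t : ℝ,
    IsLiftC F x y ∧ (∃ k : ℤ, t = thetaC n E.p + k) ∧ x < t ∧ t < y) ∨
  (E.p = E.q ∧ F.p = F.q ∧ E.p ≠ F.p ∧ E.sgn ≠ F.sgn)

/-- A set of edges is pairwise non-crossing. -/
def PairwiseNoncrossingC {n : ℕ} (T : Set (EdgeC n)) : Prop :=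
  ∀ E ∈ T, ∀ F ∈ T, ¬ CrossesC E F

/-- `T(h,a)`: the set of all tagged edges whose first endpoint is `(h,a)`. -/
def TsetC (n : ℕ) (h : Fin (n + 1)) (a : WithTop ℤ) : Set (EdgeC n) :=
  {E : EdgeC n | IsTaggedC E ∧ E.p = (h, a)}



lemma sig_mono_real (x y : ℝ) (hxy : x < y) :
    x / (2 * (1 + |x|)) < y / (2 * (1 + |y|)) := by
  have hx : (0:ℝ) < 2 * (1 + |x|) := by positivity
  have hy : (0:ℝ) < 2 * (1 + |y|) := by positivity
  rw [div_lt_div_iff₀ hx hy]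
  rcases abs_cases x with ⟨hx1, _⟩ | ⟨hx1, _⟩ <;>
    rcases abs_cases y with ⟨hy1, _⟩ | ⟨hy1, _⟩ <;> nlinarith

lemma sig_strictMono : StrictMono sig := by
  intro a b hab
  have : (a:ℝ) < b := by exact_mod_cast hab
  have := sig_mono_real a b this
  unfold sig; linarith

lemma sig_abs_lt (a : ℤ) : |(a:ℝ) / (2 * (1 + |(a:ℝ)|))| < 1/2 := by
  have h : (0:ℝ) < 2 * (1 + |(a:ℝ)|) := by positivity
  rw [abs_div, abs_of_pos h, div_lt_iff₀ h]
  nlinarith [abs_nonneg (a:ℝ)]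

lemma sig_pos (a : ℤ) : 0 < sig a := by
  have := sig_abs_lt a
  have := abs_lt.mp this
  unfold sig; linarith

lemma sig_lt_one (a : ℤ) : sig a < 1 := by
  have := abs_lt.mp (sig_abs_lt a)
  unfold sig; linarith

noncomputable def sCoord : WithTop ℤ → ℝ := fun β => WithTop.recTopCoe 1 (fun b => sig b) β

lemma sCoord_top : sCoord ⊤ = 1 := rfl
lemma sCoord_coe (b : ℤ) : sCoord (b : WithTop ℤ) = sig b := rfl

lemma sCoord_pos (β : WithTop ℤ) : 0 < sCoord β := by
  induction β using WithTop.recTopCoe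
  · norm_num [sCoord_top]
  · exact sig_pos _

lemma sCoord_le_one (β : WithTop ℤ) : sCoord β ≤ 1 := by
  induction β using WithTop.recTopCoe
  · norm_num [sCoord_top]
  · exact le_of_lt (sig_lt_one _)

lemma sCoord_strictMono : StrictMono sCoord := by
  intro x y hxy
  induction x using WithTop.recTopCoe with
  | top => exact absurd hxy (by simp)
  | coe b =>
    induction y using WithTop.recTopCoe with
    | top => exact sig_lt_one b
    | coe c => exact sig_strictMono (by exact_mod_cast hxy)

lemma sCoord_inj : Function.Injective sCoord := sCoord_strictMono.injective

lemma thetaC_eq (n : ℕ) (p : Fin (n + 1) × WithTop ℤ) :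
    thetaC n p = ((p.1.val : ℝ) + sCoord p.2) / ((n:ℝ) + 1) := by
  rcases p with ⟨k, β⟩
  induction β using WithTop.recTopCoe <;> rfl

lemma Npos (n : ℕ) : (0:ℝ) < (n:ℝ) + 1 := by positivity

lemma thetaC_pos (n : ℕ) (p : Fin (n + 1) × WithTop ℤ) : 0 < thetaC n p := by
  rw [thetaC_eq]
  have := sCoord_pos p.2
  have : (0:ℝ) ≤ p.1.val := by positivity
  positivity

lemma thetaC_le_one (n : ℕ) (p : Fin (n + 1) × WithTop ℤ) : thetaC n p ≤ 1 := by
  rw [thetaC_eq, div_le_one (Npos n)]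
  have h1 : (p.1.val : ℝ) ≤ n := by exact_mod_cast Nat.lt_succ_iff.mp p.1.isLt
  have := sCoord_le_one p.2
  linarith

lemma thetaC_inj (n : ℕ) {p q : Fin (n + 1) × WithTop ℤ} (h : thetaC n p = thetaC n q) :
    p = q := by
  rw [thetaC_eq, thetaC_eq, div_eq_div_iff (Npos n).ne' (Npos n).ne'] at h
  have h2 : (p.1.val : ℝ) + sCoord p.2 = (q.1.val : ℝ) + sCoord q.2 := by
    have hN := Npos n
    nlinarith [h]
  have hs1 := sCoord_pos p.2
  have hs2 := sCoord_pos q.2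
  have hs3 := sCoord_le_one p.2
  have hs4 := sCoord_le_one q.2
  have hk : (p.1.val : ℤ) = (q.1.val : ℤ) := by
    set d : ℤ := (p.1.val : ℤ) - (q.1.val : ℤ) with hd
    have h5 : (d : ℝ) = sCoord q.2 - sCoord p.2 := by rw [hd]; push_cast; linarith
    have h6 : (-1:ℝ) < (d:ℝ) ∧ (d:ℝ) < 1 := by rw [h5]; constructor <;> linarith
    have h7 : -1 < d ∧ d < 1 := by exact_mod_cast h6
    omega
  have hfin : p.1 = q.1 := Fin.ext (by exact_mod_cast hk)
  have hsc : sCoord p.2 = sCoord q.2 := by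
    have : ((p.1.val : ℝ)) = q.1.val := by exact_mod_cast hk
    linarith
  exact Prod.ext hfin (sCoord_inj hsc)

/-- The difference of two angles is never a nonzero-mod-1 integer unless points equal. -/
lemma fract_pos (n : ℕ) {p q : Fin (n + 1) × WithTop ℤ} (h : p ≠ q) :
    0 < Int.fract (thetaC n p - thetaC n q) := by
  rcases lt_or_eq_of_le (Int.fract_nonneg (thetaC n p - thetaC n q)) with h1 | h1
  · exact h1
  · exfalso
    have hfr : Int.fract (thetaC n p - thetaC n q)
        = thetaC n p - thetaC n q - ⌊thetaC n p - thetaC n q⌋ := rfl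
    have h2 : thetaC n p - thetaC n q = ⌊thetaC n p - thetaC n q⌋ := by
      rw [hfr] at h1; linarith
    have b1 := thetaC_pos n p
    have b2 := thetaC_pos n q
    have b3 := thetaC_le_one n p
    have b4 := thetaC_le_one n q
    have h3 : (-1:ℝ) < (⌊thetaC n p - thetaC n q⌋ : ℝ) ∧ (⌊thetaC n p - thetaC n q⌋ : ℝ) < 1 := by
      rw [← h2]; constructor <;> linarith
    have h3' : -1 < ⌊thetaC n p - thetaC n q⌋ ∧ ⌊thetaC n p - thetaC n q⌋ < 1 := by
      exact_mod_cast h3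
    have h4 : ⌊thetaC n p - thetaC n q⌋ = 0 := by omega
    have : thetaC n p = thetaC n q := by rw [h4] at h2; push_cast at h2; linarith
    exact h (thetaC_inj n this)


lemma coe_succ (b : ℤ) : (b : WithTop ℤ) + 1 = ((b + 1 : ℤ) : WithTop ℤ) := by
  push_cast; ring

lemma withtop_succ_inj (x y : WithTop ℤ) (h : x + 1 = y + 1) : x = y := by
  induction x using WithTop.recTopCoe <;> induction y using WithTop.recTopCoe <;>
    simp_all [← WithTop.coe_one, ← WithTop.coe_add]


lemma one_le_N (n : ℕ) : (1:ℝ) ≤ (n:ℝ) + 1 := by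
  have : (0:ℝ) ≤ n := Nat.cast_nonneg n
  linarith

/-- For `v ∉ {u, u+1}` and any point `r ≠ u+1`, there is a point `w`, distinct from `r`,
sitting strictly between `u` and `v` on the circle (just after `u`). -/
lemma exists_w (n : ℕ) (u v r : Fin (n + 1) × WithTop ℤ)
    (hvu : v ≠ u) (hv : v ≠ (u.1, u.2 + 1)) (hr : r ≠ (u.1, u.2 + 1)) :
    ∃ w : Fin (n + 1) × WithTop ℤ, w ≠ r ∧ w ≠ u ∧ (u.2 = ⊤ → w.2 ≠ ⊤) ∧
      0 < Int.fract (thetaC n w - thetaC n u) ∧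
      Int.fract (thetaC n w - thetaC n u) < Int.fract (thetaC n v - thetaC n u) := by
  obtain ⟨k, β⟩ := u
  obtain ⟨l, γ⟩ := v
  obtain ⟨kr, ρ⟩ := r
  simp only at hv hr ⊢
  have hN := Npos n
  set N : ℝ := (n:ℝ) + 1 with hNdef
  have hN1 : (1:ℝ) ≤ N := one_le_N n
  set D : ℝ := Int.fract (thetaC n (l, γ) - thetaC n (k, β)) with hDdef
  have hDpos : 0 < D := fract_pos n hvu
  have hD1 : D < 1 := Int.fract_lt_one _
  have hDfr : D = thetaC n (l, γ) - thetaC n (k, β) - ⌊thetaC n (l, γ) - thetaC n (k, β)⌋ := rfl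
  set m : ℤ := ⌊thetaC n (l, γ) - thetaC n (k, β)⌋ with hm
  have hmval : m = 0 ∨ m = -1 := by
    have b1 := thetaC_pos n (l, γ); have b2 := thetaC_pos n (k, β)
    have b3 := thetaC_le_one n (l, γ); have b4 := thetaC_le_one n (k, β)
    have hD0 : 0 ≤ D := Int.fract_nonneg _
    have h5 : (-2:ℝ) < (m:ℝ) ∧ (m:ℝ) < 1 := by constructor <;> nlinarith
    have h6 : -2 < m ∧ m < 1 := by exact_mod_cast h5
    omega
  have hDN : D * N = (l.val : ℝ) + sCoord γ - (k.val : ℝ) - sCoord β - m * N := by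
    rw [hDfr, thetaC_eq, thetaC_eq]
    field_simp
    ring
  have hkn : (k.val : ℤ) ≤ n := by exact_mod_cast Nat.lt_succ_iff.mp k.isLt
  have hln : (l.val : ℤ) ≤ n := by exact_mod_cast Nat.lt_succ_iff.mp l.isLt
  rcases eq_or_ne β ⊤ with hβ | hβ
  · -- β = ⊤ : take w = (k+1, b₀)
    subst hβ
    set b₀ : ℤ := min ((WithTop.untopD 1 γ) - 1) ((WithTop.untopD 1 ρ) - 1) with hb₀
    refine ⟨(k + 1, (b₀ : WithTop ℤ)), ?_, ?_, fun _ => WithTop.coe_ne_top, ?_⟩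
    · -- ≠ r
      intro hw
      have h2 : (b₀ : WithTop ℤ) = ρ := congrArg Prod.snd hw
      rcases eq_or_ne ρ ⊤ with hρ | hρ
      · rw [hρ] at h2; exact WithTop.coe_ne_top h2
      · obtain ⟨c, rfl⟩ := WithTop.ne_top_iff_exists.mp hρ
        have : b₀ = c := by exact_mod_cast h2
        have : b₀ ≤ c - 1 := by
          rw [hb₀]; exact min_le_of_right_le (by rw [WithTop.untopD_coe])
        omega
    · -- ≠ u
      intro hw
      have h2 : (b₀ : WithTop ℤ) = ⊤ := congrArg Prod.snd hw
      exact WithTop.coe_ne_top h2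
    -- the fract computation
    have hb₀γ : sig b₀ < sCoord γ := by
      rcases eq_or_ne γ ⊤ with hγ | hγ
      · rw [hγ, sCoord_top]; exact sig_lt_one b₀
      · obtain ⟨c, rfl⟩ := WithTop.ne_top_iff_exists.mp hγ
        have h1 : b₀ ≤ c - 1 := by
          rw [hb₀]; exact min_le_of_left_le (by rw [WithTop.untopD_coe])
        rw [sCoord_coe]
        exact sig_strictMono (by omega)
    have hθdiff : Int.fract (thetaC n (k + 1, (b₀ : WithTop ℤ)) - thetaC n (k, (⊤ : WithTop ℤ)))
        = sig b₀ / N := by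
      have hself : Int.fract (sig b₀ / N) = sig b₀ / N := by
        refine Int.fract_eq_self.mpr ⟨le_of_lt (div_pos (sig_pos b₀) hN), ?_⟩
        rw [div_lt_one hN]
        nlinarith [sig_lt_one b₀]
      rw [thetaC_eq, thetaC_eq]
      simp only [sCoord_coe, sCoord_top]
      rcases eq_or_ne k (Fin.last n) with hk | hk
      · have hval : ((k+1 : Fin (n+1)).val : ℝ) = 0 := by
          rw [Fin.val_add_one, if_pos hk]; norm_num
        have hkval : (k.val : ℝ) = n := by rw [hk]; simp [Fin.last]
        have heq : ((k+1 : Fin (n+1)).val + sig b₀) / N - ((k.val : ℝ) + 1) / N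
            = sig b₀ / N - ((1:ℤ) : ℝ) := by
          rw [hval, hkval, hNdef]
          push_cast
          field_simp
          ring
        rw [heq, Int.fract_sub_intCast]
        exact hself
      · have hval : ((k+1 : Fin (n+1)).val : ℝ) = (k.val : ℝ) + 1 := by
          rw [Fin.val_add_one, if_neg hk]; push_cast; ring
        have heq : ((k+1 : Fin (n+1)).val + sig b₀) / N - ((k.val : ℝ) + 1) / N
            = sig b₀ / N := by
          rw [hval]; ring
        rw [heq]
        exact hself
    rw [hθdiff]
    refine ⟨div_pos (sig_pos b₀) hN, ?_⟩
    · rw [div_lt_iff₀ hN]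
      have hsc : sCoord (⊤ : WithTop ℤ) = 1 := sCoord_top
      rw [hsc] at hDN
      set M : ℤ := (l.val : ℤ) - (k.val : ℤ) - 1 - m * ((n:ℤ) + 1) with hM
      have hMcast : (M : ℝ) = (l.val : ℝ) - (k.val : ℝ) - 1 - m * N := by
        rw [hM, hNdef]; push_cast; ring
      have hDNM : D * N = (M : ℝ) + sCoord γ := by rw [hMcast, hDN]; ring
      have hM0 : 0 ≤ M := by
        have h1 : (0:ℝ) < (M : ℝ) + sCoord γ := by
          rw [← hDNM]; exact mul_pos hDpos hN
        have h2 : sCoord γ ≤ 1 := sCoord_le_one γ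
        have h3 : (-1 : ℝ) < (M : ℝ) := by linarith
        have h4 : (-1 : ℤ) < M := by exact_mod_cast h3
        omega
      rcases eq_or_lt_of_le hM0 with hM1 | hM1
      · have hMr : (M : ℝ) = 0 := by exact_mod_cast hM1.symm
        rw [hDNM, hMr]
        linarith
      · have : (1:ℝ) ≤ (M : ℝ) := by exact_mod_cast hM1
        rw [hDNM]
        nlinarith [sig_lt_one b₀, sCoord_pos γ]
  · -- β = b finite : take w = (k, b+1)
    obtain ⟨b, rfl⟩ := WithTop.ne_top_iff_exists.mp hβ
    refine ⟨(k, ((b + 1 : ℤ) : WithTop ℤ)), ?_, ?_, fun h => absurd h WithTop.coe_ne_top, ?_⟩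
    · -- ≠ r
      intro hw
      apply hr
      rw [← hw, coe_succ]
    · -- ≠ u
      intro hw
      have h2 : ((b + 1 : ℤ) : WithTop ℤ) = (b : WithTop ℤ) := congrArg Prod.snd hw
      have : b + 1 = b := by exact_mod_cast h2
      omega
    have hδpos : 0 < sig (b+1) - sig b := by
      have := sig_strictMono (show b < b + 1 by omega)
      linarith
    have hδ1 : sig (b+1) - sig b < 1 := by
      have := sig_pos b; have := sig_lt_one (b+1); linarith
    have hθdiff : Int.fract (thetaC n (k, ((b + 1 : ℤ) : WithTop ℤ)) - thetaC n (k, (b : WithTop ℤ)))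
        = (sig (b+1) - sig b) / N := by
      rw [thetaC_eq, thetaC_eq]
      simp only [sCoord_coe]
      have heq : ((k.val : ℝ) + sig (b+1)) / N - ((k.val : ℝ) + sig b) / N
          = (sig (b+1) - sig b) / N := by ring
      rw [heq]
      refine Int.fract_eq_self.mpr ⟨le_of_lt (div_pos hδpos hN), ?_⟩
      rw [div_lt_one hN]
      linarith
    rw [hθdiff]
    refine ⟨div_pos hδpos hN, ?_⟩
    · rw [div_lt_iff₀ hN]
      rw [sCoord_coe] at hDN
      set M : ℤ := (l.val : ℤ) - (k.val : ℤ) - m * ((n:ℤ) + 1) with hM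
      have hMcast : (M : ℝ) = (l.val : ℝ) - (k.val : ℝ) - m * N := by
        rw [hM, hNdef]; push_cast; ring
      have hDNM : D * N = (M : ℝ) + sCoord γ - sig b := by rw [hMcast, hDN]; ring
      have hM0 : 0 ≤ M := by
        have h1 : (0:ℝ) < (M : ℝ) + sCoord γ - sig b := by
          rw [← hDNM]; exact mul_pos hDpos hN
        have h2 : sCoord γ ≤ 1 := sCoord_le_one γ
        have h4 := sig_pos b
        have h3 : (-1 : ℝ) < (M : ℝ) := by linarith
        have h5 : (-1 : ℤ) < M := by exact_mod_cast h3
        omega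
      rcases eq_or_lt_of_le hM0 with hM1 | hM1
      · -- M = 0 : then m = 0 and l = k, and sCoord γ > sig b
        have hMexp : (l.val : ℤ) - (k.val : ℤ) - m * ((n:ℤ) + 1) = 0 := by
          rw [← hM]; exact hM1.symm
        have hml : m = 0 ∧ (l.val : ℤ) = (k.val : ℤ) := by
          rcases hmval with h' | h' <;> rw [h'] at hMexp <;> omega
        have hlk : l = k := Fin.ext (by exact_mod_cast hml.2)
        have hMr : (M : ℝ) = 0 := by exact_mod_cast hM1.symm
        rw [hDNM, hMr]
        have hsb : sig b < sCoord γ := by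
          have h1 : (0:ℝ) < D * N := mul_pos hDpos hN
          rw [hDNM, hMr] at h1
          linarith
        -- γ > b, and γ ≠ b+1 because v ≠ (u.1, u.2+1)
        have hγb : (b : WithTop ℤ) < γ := by
          have := sCoord_strictMono.lt_iff_lt (a := (b : WithTop ℤ)) (b := γ)
          rw [← this]; rw [sCoord_coe]; exact hsb
        rcases eq_or_ne γ ⊤ with hγ | hγ
        · rw [hγ, sCoord_top]
          have := sig_lt_one (b+1); linarith
        · obtain ⟨c, rfl⟩ := WithTop.ne_top_iff_exists.mp hγ
          have hbc : b < c := by exact_mod_cast hγb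
          have hcne : c ≠ b + 1 := by
            intro hc
            apply hv
            rw [hlk, coe_succ, hc]
          have hbc2 : b + 1 < c := by omega
          have := sig_strictMono hbc2
          rw [sCoord_coe]
          linarith
      · have : (1:ℝ) ≤ (M : ℝ) := by exact_mod_cast hM1
        rw [hDNM]
        nlinarith [sig_lt_one (b+1), sig_pos b, sCoord_pos γ]


lemma no_two_reps (c x t : ℝ) (k m : ℤ) (hx : x = c + k) (ht : t = c + m)
    (h1 : x < t) (h2 : t < x + 1) : False := by
  have h3 : (k : ℝ) < m := by linarith
  have h4 : (m : ℝ) < k + 1 := by linarith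
  have h5 : k < m := by exact_mod_cast h3
  have h6 : m < k + 1 := by exact_mod_cast h4
  omega

lemma rep_eq (u z : ℝ) : u + Int.fract (z - u) = z + ((-⌊z - u⌋ : ℤ) : ℝ) := by
  have hf : Int.fract (z - u) = z - u - ⌊z - u⌋ := rfl
  rw [hf]; push_cast; ring

lemma rep_eq' (u z : ℝ) : u + Int.fract (z - u) - 1 = z + ((-⌊z - u⌋ - 1 : ℤ) : ℝ) := by
  have hf : Int.fract (z - u) = z - u - ⌊z - u⌋ := rfl
  rw [hf]; push_cast; ring

lemma self_rep (u : ℝ) : u = u + ((0 : ℤ) : ℝ) := by push_cast; ring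

lemma succ_rep (u : ℝ) : u + 1 = u + ((1 : ℤ) : ℝ) := by push_cast; ring


/-- each `T(h,a)`, `a ∈ ℤ ∪ {∞}`, is a triangulation of the punctured
completed `(n+1,∞)`-gon: its elements are pairwise non-crossing tagged edges, and every
tagged edge not belonging to `T(h,a)` crosses some element of `T(h,a)`. -/
theorem TsetC_isTriangulation (n : ℕ) (h : Fin (n + 1)) (a : WithTop ℤ) :
    (∀ E ∈ TsetC n h a, IsTaggedC E) ∧
    PairwiseNoncrossingC (TsetC n h a) ∧
    (∀ E : EdgeC n, IsTaggedC E → E ∉ TsetC n h a →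
      ∃ F ∈ TsetC n h a, CrossesC E F) := by
  refine ⟨fun E hE => hE.1, ?_, ?_⟩
  · -- pairwise non-crossing
    rintro E ⟨hTE, hpE⟩ F ⟨hTF, hpF⟩ hC
    rcases hC with
        ⟨hEpq, hFpq, x₁, y₁, x₂, y₂, ⟨⟨k1, hx1⟩, ⟨j1, hy1⟩, hx1y1, hy1x1⟩,
          ⟨⟨k2, hx2⟩, ⟨j2, hy2⟩, hx2y2, hy2x2⟩, hcfg | hcfg⟩
      | ⟨hEpq, hFpq, x, y, t, ⟨⟨k1, hx1⟩, ⟨j1, hy1⟩, hxy, hyx⟩, ⟨kt, ht⟩, hxt, hty⟩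
      | ⟨hEpq, hFpq, x, y, t, ⟨⟨k1, hx1⟩, ⟨j1, hy1⟩, hxy, hyx⟩, ⟨kt, ht⟩, hxt, hty⟩
      | ⟨hEpq, hFpq, hne, hsgn⟩
    · rw [hpE] at hx1; rw [hpF] at hx2
      exact no_two_reps _ _ _ _ _ hx1 hx2 hcfg.1 (by linarith [hcfg.2.1, hcfg.2.2])
    · rw [hpF] at hx2; rw [hpE] at hx1
      exact no_two_reps _ _ _ _ _ hx2 hx1 hcfg.1 (by linarith [hcfg.2.1, hcfg.2.2])
    · rw [hpE] at hx1; rw [hpF] at ht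
      exact no_two_reps _ _ _ _ _ hx1 ht hxt (by linarith)
    · rw [hpF] at hx1; rw [hpE] at ht
      exact no_two_reps _ _ _ _ _ hx1 ht hxt (by linarith)
    · exact hne (hpE.trans hpF.symm)
  · -- completeness
    intro E hTE hEnot
    have hpE : E.p ≠ (h, a) := fun hp => hEnot ⟨hTE, hp⟩
    obtain ⟨htag1, htag2, _⟩ := hTE
    rcases eq_or_ne E.p E.q with hpq | hpq
    · -- E is a puncture edge
      rcases eq_or_ne a ⊤ with ha | ha
      · -- a = ⊤
        subst ha
        have hv : (h, (⊤ : WithTop ℤ)) ≠ (E.p.1, E.p.2 + 1) := by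
          intro hEq
          have h1 : E.p.2 + 1 = ⊤ := (congrArg Prod.snd hEq).symm
          have h2 : E.p.2 = ⊤ := by
            by_contra h3
            obtain ⟨b, hb⟩ := WithTop.ne_top_iff_exists.mp h3
            rw [← hb, coe_succ] at h1
            exact WithTop.coe_ne_top h1
          exact hpE (Prod.ext (congrArg Prod.fst hEq).symm h2)
        obtain ⟨w, hwr, hwu, hwtop, hΔpos, hΔlt⟩ :=
          exists_w n E.p (h, ⊤) (h, ⊤) (Ne.symm hpE) hv hv
        set θu : ℝ := thetaC n E.p with hθu
        set Δ : ℝ := Int.fract (thetaC n w - θu) with hΔ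
        set D : ℝ := Int.fract (thetaC n (h, (⊤ : WithTop ℤ)) - θu) with hD
        have hD1 : D < 1 := Int.fract_lt_one _
        have hΔ1 : Δ < 1 := Int.fract_lt_one _
        have hDpos : 0 < D := fract_pos n (Ne.symm hpE)
        refine ⟨⟨(h, ⊤), w, 1⟩, ⟨⟨hwr, Or.inl rfl, fun _ => rfl⟩, rfl⟩, ?_⟩
        refine Or.inr (Or.inr (Or.inl ⟨hpq, Ne.symm hwr, θu + D - 1, θu + Δ, θu,
          ⟨⟨-⌊thetaC n (h, (⊤ : WithTop ℤ)) - θu⌋ - 1, rep_eq' θu _⟩,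
           ⟨-⌊thetaC n w - θu⌋, rep_eq θu _⟩, by linarith, by linarith⟩,
          ⟨0, self_rep θu⟩, by linarith, by linarith⟩))
      · -- a finite : opposite-sign puncture edge at (h,a)
        have hne2 : (h, a) ≠ (h, a + 1) := by
          intro hEq
          have h1 : a = a + 1 := congrArg Prod.snd hEq
          obtain ⟨b, hb⟩ := WithTop.ne_top_iff_exists.mp ha
          rw [← hb, coe_succ] at h1
          have : b = b + 1 := by exact_mod_cast h1
          omega
        refine ⟨⟨(h, a), (h, a), -E.sgn⟩, ⟨⟨hne2, ?_, fun hc => absurd rfl hc⟩, rfl⟩, ?_⟩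
        · show -E.sgn = 1 ∨ -E.sgn = -1
          rcases htag2 with h' | h' <;> omega
        · refine Or.inr (Or.inr (Or.inr ⟨hpq, rfl, hpE, ?_⟩))
          show E.sgn ≠ -E.sgn
          rcases htag2 with h' | h' <;> omega
    · -- E has distinct endpoints
      set θu : ℝ := thetaC n E.p with hθu
      set Dq : ℝ := Int.fract (thetaC n E.q - θu) with hDq
      set Dc : ℝ := Int.fract (thetaC n (h, a) - θu) with hDc
      have hDqpos : 0 < Dq := fract_pos n (Ne.symm hpq)
      have hDcpos : 0 < Dc := fract_pos n (Ne.symm hpE)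
      have hDq1 : Dq < 1 := Int.fract_lt_one _
      have hDc1 : Dc < 1 := Int.fract_lt_one _
      rcases lt_or_ge Dc Dq with hlt | hge
      · -- the point (h,a) is strictly inside the arc of E
        rcases eq_or_ne a ⊤ with ha | ha
        · -- a = ⊤ : F joins (h,⊤) to E.p
          subst ha
          refine ⟨⟨(h, ⊤), E.p, 1⟩, ⟨⟨hpE, Or.inl rfl, fun _ => rfl⟩, rfl⟩, ?_⟩
          refine Or.inl ⟨hpq, Ne.symm hpE, θu, θu + Dq, θu + Dc, θu + 1,
            ⟨⟨0, self_rep θu⟩, ⟨-⌊thetaC n E.q - θu⌋, rep_eq θu _⟩, by linarith, by linarith⟩,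
            ⟨⟨-⌊thetaC n (h, (⊤ : WithTop ℤ)) - θu⌋, rep_eq θu _⟩, ⟨1, succ_rep θu⟩,
              by linarith, by linarith⟩,
            Or.inl ⟨by linarith, by linarith, by linarith⟩⟩
        · -- a finite : F is the (+1)-tagged puncture edge at (h,a)
          have hne2 : (h, a) ≠ (h, a + 1) := by
            intro hEq
            have h1 : a = a + 1 := congrArg Prod.snd hEq
            obtain ⟨b, hb⟩ := WithTop.ne_top_iff_exists.mp ha
            rw [← hb, coe_succ] at h1
            have : b = b + 1 := by exact_mod_cast h1
            omega
          refine ⟨⟨(h, a), (h, a), 1⟩, ⟨⟨hne2, Or.inl rfl, fun _ => rfl⟩, rfl⟩, ?_⟩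
          refine Or.inr (Or.inl ⟨hpq, rfl, θu, θu + Dq, θu + Dc,
            ⟨⟨0, self_rep θu⟩, ⟨-⌊thetaC n E.q - θu⌋, rep_eq θu _⟩, by linarith, by linarith⟩,
            ⟨-⌊thetaC n (h, a) - θu⌋, rep_eq θu _⟩, by linarith, by linarith⟩)
      · -- (h,a) is not inside : use a point w just after E.p
        have hr : (h, a + 1) ≠ (E.p.1, E.p.2 + 1) := by
          intro hEq
          have h1 : E.p.2 = a := (withtop_succ_inj _ _ (congrArg Prod.snd hEq)).symm
          exact hpE (Prod.ext (congrArg Prod.fst hEq).symm h1)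
        obtain ⟨w, hwr, hwu, hwtop, hΔpos, hΔlt⟩ :=
          exists_w n E.p E.q (h, a + 1) (Ne.symm hpq) htag1 hr
        set Δ : ℝ := Int.fract (thetaC n w - θu) with hΔ
        have hDq' : Int.fract (thetaC n E.q - thetaC n E.p) = Dq := rfl
        have hwP : w ≠ (h, a) := by
          intro hweq
          have h2 : Δ = Dc := by rw [hΔ, hDc, hweq]
          linarith
        refine ⟨⟨(h, a), w, 1⟩, ⟨⟨hwr, Or.inl rfl, fun _ => rfl⟩, rfl⟩, ?_⟩
        refine Or.inl ⟨hpq, Ne.symm hwP, θu, θu + Dq, θu + Dc - 1, θu + Δ,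
          ⟨⟨0, self_rep θu⟩, ⟨-⌊thetaC n E.q - θu⌋, rep_eq θu _⟩, by linarith, by linarith⟩,
          ⟨⟨-⌊thetaC n (h, a) - θu⌋ - 1, rep_eq' θu _⟩, ⟨-⌊thetaC n w - θu⌋, rep_eq θu _⟩,
            by linarith, by linarith⟩,
          Or.inr ⟨by linarith, by linarith, by linarith⟩⟩

end CompletedPuncturedGon
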